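/- (Multipole asymptotics.) Fix ν > 0 and h ∈ [0, 1), set θ_h := arcsin h, and define G : ℝ → ℝ by G(x) := (2ν/π)·∫₀^∞ t·e^{−t|x|·cos θ_h} / (ν²t²cos²θ_h + 4(t² − 1)²) dt. Let f : ℝ → ℝ be measurable with |f(y)| ≤ C₀/(1 + y⁴) for some C₀ > 0 and all y ∈ ℝ. Then lim_{x→+∞} x²·∫_ℝ G(x − y) f(y) dy = (ν/(2π·cos²θ_h))·∫_ℝ f(y) dy. -/

import Mathlib

open MeasureTheory Real Filter Set
open scoped ENNReal Topology

/-- The fundamental solution of the linearized Néel wall operator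
`L = -d²/dx² + (ν/2) cos²θ_h (-d²/dx²)^{1/2} + cos²θ_h`, with `θ_h = arcsin h`. -/
noncomputable def Gfun (ν h : ℝ) (x : ℝ) : ℝ :=
  2 * ν / Real.pi *
    ∫ t in Set.Ioi (0 : ℝ),
      t * Real.exp (-t * |x| * Real.cos (Real.arcsin h)) /
        (ν ^ 2 * t ^ 2 * Real.cos (Real.arcsin h) ^ 2 + 4 * (t ^ 2 - 1) ^ 2)

noncomputable section NeelAux

/-- denominator -/
def dnm (ν c t : ℝ) : ℝ := ν ^ 2 * t ^ 2 * c ^ 2 + 4 * (t ^ 2 - 1) ^ 2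

/-- lower bound constant -/
def mlb (ν c : ℝ) : ℝ := min (9/4 : ℝ) (ν ^ 2 * c ^ 2 / 4)

lemma mlb_pos {ν c : ℝ} (hν : 0 < ν) (hc : 0 < c) : 0 < mlb ν c := by
  have : 0 < ν ^ 2 * c ^ 2 / 4 := by positivity
  exact lt_min (by norm_num) this

lemma dnm_lb {ν c : ℝ} (hν : 0 < ν) (hc : 0 < c) (t : ℝ) : mlb ν c ≤ dnm ν c t := by
  unfold dnm mlb
  rcases le_or_gt (t ^ 2) (1/4) with h | h
  · refine le_trans (min_le_left _ _) ?_
    nlinarith [sq_nonneg t, sq_nonneg ν, sq_nonneg c, sq_nonneg (ν * t * c)]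
  · refine le_trans (min_le_right _ _) ?_
    nlinarith [sq_nonneg (t ^ 2 - 1), sq_nonneg (ν * c), sq_nonneg t]

lemma dnm_pos {ν c : ℝ} (hν : 0 < ν) (hc : 0 < c) (t : ℝ) : 0 < dnm ν c t :=
  lt_of_lt_of_le (mlb_pos hν hc) (dnm_lb hν hc t)

lemma continuous_dnm (ν c : ℝ) : Continuous (dnm ν c) := by
  unfold dnm; fun_prop

lemma continuous_phi {ν c : ℝ} (hν : 0 < ν) (hc : 0 < c) :
    Continuous (fun t : ℝ => t / dnm ν c t) :=
  continuous_id.div (continuous_dnm ν c) (fun t => (dnm_pos hν hc t).ne')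

/-- integrability of `t / dnm` on `Ioi 0`. -/
lemma integrable_phi {ν c : ℝ} (hν : 0 < ν) (hc : 0 < c) :
    IntegrableOn (fun t : ℝ => t / dnm ν c t) (Ioi 0) := by
  have h1 : IntegrableOn (fun t : ℝ => t / dnm ν c t) (Ioc 0 2) := by
    refine Integrable.mono' (g := fun _ : ℝ => 2 / mlb ν c)
      (integrableOn_const measure_Ioc_lt_top.ne)
      ((continuous_phi hν hc).aestronglyMeasurable.restrict) ?_
    refine (ae_restrict_iff' measurableSet_Ioc).mpr (ae_of_all _ fun t ht => ?_)
    have h0 : 0 < t := ht.1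
    have hd := dnm_lb hν hc t
    have hm := mlb_pos hν hc
    have hd0 := dnm_pos hν hc t
    rw [Real.norm_eq_abs, abs_of_nonneg (div_nonneg h0.le hd0.le)]
    exact div_le_div₀ (by norm_num) ht.2 hm hd
  have h2 : IntegrableOn (fun t : ℝ => t / dnm ν c t) (Ioi 2) := by
    refine Integrable.mono' (g := fun t : ℝ => t ^ (-3 : ℝ))
      (integrableOn_Ioi_rpow_of_lt (by norm_num) (by norm_num : (0:ℝ) < 2))
      ((continuous_phi hν hc).aestronglyMeasurable.restrict) ?_
    refine (ae_restrict_iff' measurableSet_Ioi).mpr (ae_of_all _ fun t ht => ?_)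
    have h0 : (2:ℝ) < t := ht
    have h0' : 0 < t := by linarith
    have h4 : 4 < t ^ 2 := by nlinarith
    have h44 : 4 * t ^ 2 ≤ t ^ 4 := by nlinarith
    have hd : 2 * t ^ 4 ≤ dnm ν c t := by
      unfold dnm; nlinarith [sq_nonneg (ν * t * c)]
    have hd0 : 0 < dnm ν c t := dnm_pos hν hc t
    have hr : t ^ (-3 : ℝ) = (t ^ 3)⁻¹ := by
      rw [show (-3 : ℝ) = -(3:ℕ) by norm_num, Real.rpow_neg h0'.le, Real.rpow_natCast]
    rw [Real.norm_eq_abs, abs_of_nonneg (div_nonneg h0'.le hd0.le)]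
    show t / dnm ν c t ≤ t ^ (-3 : ℝ)
    rw [hr, inv_eq_one_div, div_le_div_iff₀ hd0 (by positivity)]
    nlinarith [hd]
  have : Ioc (0:ℝ) 2 ∪ Ioi 2 = Ioi 0 := Ioc_union_Ioi_eq_Ioi (by norm_num)
  rw [← this]
  exact h1.union h2

/-- integrability of base exponential. -/
lemma integrable_base {c : ℝ} (hc : 0 < c) :
    IntegrableOn (fun s : ℝ => s * Real.exp (-c * s)) (Ioi 0) := by
  have := integrableOn_rpow_mul_exp_neg_mul_rpow (p := 1) (s := 1) (b := c)
    (by norm_num) (by norm_num) hc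
  refine this.congr_fun (fun s hs => ?_) measurableSet_Ioi
  simp [Real.rpow_one]

lemma integral_base {c : ℝ} (hc : 0 < c) :
    ∫ s in Ioi (0:ℝ), s * Real.exp (-c * s) = 1 / c ^ 2 := by
  have := integral_rpow_mul_exp_neg_mul_rpow (p := 1) (q := 1) (b := c)
    (by norm_num) (by norm_num) hc
  simp only [Real.rpow_one] at this
  rw [this]
  norm_num [Real.Gamma_two]


noncomputable section GfunLayer

variable {ν h : ℝ}

lemma cos_arcsin_pos (hh : h ∈ Set.Ico (0 : ℝ) 1) : 0 < Real.cos (Real.arcsin h) := by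
  rw [Real.cos_arcsin]
  have : 0 < 1 - h ^ 2 := by nlinarith [hh.1, hh.2]
  positivity

lemma Gfun_eq (x : ℝ) :
    Gfun ν h x = 2 * ν / Real.pi *
      ∫ t in Ioi (0 : ℝ),
        t * Real.exp (-t * |x| * Real.cos (Real.arcsin h)) /
          dnm ν (Real.cos (Real.arcsin h)) t := rfl

lemma Gfun_nonneg (hν : 0 < ν) (hh : h ∈ Set.Ico (0 : ℝ) 1) (x : ℝ) : 0 ≤ Gfun ν h x := by
  set c := Real.cos (Real.arcsin h) with hcdef
  have hc := cos_arcsin_pos hh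
  rw [Gfun_eq]
  have hπ := Real.pi_pos
  refine mul_nonneg (by positivity) ?_
  refine setIntegral_nonneg measurableSet_Ioi (fun t ht => ?_)
  have ht0 : 0 < t := ht
  exact div_nonneg (by positivity) (dnm_pos hν hc t).le

lemma integrableOn_Gfun_integrand (hν : 0 < ν) (hh : h ∈ Set.Ico (0 : ℝ) 1) (x : ℝ) :
    IntegrableOn
      (fun t : ℝ => t * Real.exp (-t * |x| * Real.cos (Real.arcsin h)) /
        dnm ν (Real.cos (Real.arcsin h)) t) (Ioi 0) := by
  set c := Real.cos (Real.arcsin h) with hcdef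
  have hc := cos_arcsin_pos hh
  refine Integrable.mono' (g := fun t : ℝ => t / dnm ν c t) (integrable_phi hν hc)
    ?_ ?_
  · exact ((continuous_id.mul (by fun_prop)).div (continuous_dnm ν c)
      (fun t => (dnm_pos hν hc t).ne')).aestronglyMeasurable
  · refine (ae_restrict_iff' measurableSet_Ioi).mpr (ae_of_all _ fun t ht => ?_)
    have ht0 : 0 < t := ht
    have hd := dnm_pos hν hc t
    have hexp : Real.exp (-t * |x| * c) ≤ 1 := by
      rw [Real.exp_le_one_iff]
      have : 0 ≤ t * |x| * c := by positivity
      linarith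
    rw [Real.norm_eq_abs, abs_of_nonneg (by positivity)]
    have hnum : t * Real.exp (-t * |x| * c) ≤ t := by
      nlinarith [Real.exp_pos (-t * |x| * c)]
    exact div_le_div_of_nonneg_right hnum hd.le

lemma Gfun_le (hν : 0 < ν) (hh : h ∈ Set.Ico (0 : ℝ) 1) (x : ℝ) :
    Gfun ν h x ≤ 2 * ν / Real.pi *
      ∫ t in Ioi (0:ℝ), t / dnm ν (Real.cos (Real.arcsin h)) t := by
  set c := Real.cos (Real.arcsin h) with hcdef
  have hc := cos_arcsin_pos hh
  rw [Gfun_eq]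
  have hπ := Real.pi_pos
  refine mul_le_mul_of_nonneg_left ?_ (by positivity)
  refine setIntegral_mono_on (integrableOn_Gfun_integrand hν hh x)
    (integrable_phi hν hc) measurableSet_Ioi (fun t ht => ?_)
  have ht0 : 0 < t := ht
  have hd := dnm_pos hν hc t
  have hexp : Real.exp (-t * |x| * c) ≤ 1 := by
    rw [Real.exp_le_one_iff]
    have : 0 ≤ t * |x| * c := by positivity
    linarith
  have hnum : t * Real.exp (-t * |x| * c) ≤ t := by
    nlinarith [Real.exp_pos (-t * |x| * c)]
  exact div_le_div_of_nonneg_right hnum hd.le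

lemma Gfun_measurable (hν : 0 < ν) (hh : h ∈ Set.Ico (0 : ℝ) 1) :
    Measurable (Gfun ν h) := by
  set c := Real.cos (Real.arcsin h) with hcdef
  have hc := cos_arcsin_pos hh
  have hF : Continuous (fun p : ℝ × ℝ =>
      p.2 * Real.exp (-p.2 * |p.1| * c) / dnm ν c p.2) := by
    exact (continuous_snd.mul (by fun_prop)).div
      ((continuous_dnm ν c).comp continuous_snd) (fun p => (dnm_pos hν hc p.2).ne')
  have := (hF.stronglyMeasurable.integral_prod_right'
    (ν := volume.restrict (Ioi (0:ℝ)))).measurable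
  exact this.const_mul (2 * ν / Real.pi)

end GfunLayer

noncomputable section LimitLayer

variable {ν h : ℝ}

lemma sq_mul_Gfun_eq (hν : 0 < ν) (hh : h ∈ Set.Ico (0 : ℝ) 1) {x : ℝ} (hx : 0 < x) :
    x ^ 2 * Gfun ν h x = 2 * ν / Real.pi *
      ∫ s in Ioi (0:ℝ),
        s * Real.exp (-(Real.cos (Real.arcsin h)) * s) /
          dnm ν (Real.cos (Real.arcsin h)) (s / x) := by
  set c := Real.cos (Real.arcsin h) with hcdef
  have hc := cos_arcsin_pos hh
  set g : ℝ → ℝ := fun s => s * Real.exp (-c * s) / dnm ν c (s / x) with hg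
  have hcomp := integral_comp_mul_left_Ioi g 0 hx
  rw [mul_zero, smul_eq_mul] at hcomp
  have hgx : ∀ t ∈ Ioi (0:ℝ), g (x * t) = x * (t * Real.exp (-t * x * c) / dnm ν c t) := by
    intro t ht
    have h1 : x * t / x = t := by field_simp
    have h2 : -c * (x * t) = -t * x * c := by ring
    rw [hg]
    simp only
    rw [h1, h2]
    ring
  rw [setIntegral_congr_fun measurableSet_Ioi hgx, integral_const_mul] at hcomp
  rw [Gfun_eq, abs_of_pos hx, ← hcdef]
  have hx' : x ≠ 0 := hx.ne'
  calc x ^ 2 * (2 * ν / Real.pi * ∫ t in Ioi (0:ℝ), t * Real.exp (-t * x * c) / dnm ν c t)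
      = 2 * ν / Real.pi * (x * (x * ∫ t in Ioi (0:ℝ), t * Real.exp (-t * x * c) / dnm ν c t)) := by
        ring
    _ = 2 * ν / Real.pi * (x * (x⁻¹ * ∫ s in Ioi (0:ℝ), g s)) := by rw [hcomp]
    _ = 2 * ν / Real.pi * ∫ s in Ioi (0:ℝ), g s := by
        field_simp

lemma integrableOn_sub_integrand (hν : 0 < ν) (hh : h ∈ Set.Ico (0 : ℝ) 1) (x : ℝ) :
    IntegrableOn (fun s : ℝ =>
      s * Real.exp (-(Real.cos (Real.arcsin h)) * s) /
        dnm ν (Real.cos (Real.arcsin h)) (s / x)) (Ioi 0) := by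
  set c := Real.cos (Real.arcsin h) with hcdef
  have hc := cos_arcsin_pos hh
  have hm := mlb_pos hν hc
  refine Integrable.mono' (g := fun s : ℝ => (1 / mlb ν c) * (s * Real.exp (-c * s)))
    ((integrable_base hc).const_mul _) ?_ ?_
  · exact ((continuous_id.mul (by fun_prop)).div
      ((continuous_dnm ν c).comp (continuous_id.div_const x))
      (fun s => (dnm_pos hν hc _).ne')).aestronglyMeasurable
  · refine (ae_restrict_iff' measurableSet_Ioi).mpr (ae_of_all _ fun s hs => ?_)
    have hs0 : 0 < s := hs
    have hd := dnm_pos hν hc (s / x)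
    have hlb := dnm_lb hν hc (s / x)
    have he := Real.exp_pos (-c * s)
    rw [Real.norm_eq_abs, abs_of_nonneg (by positivity)]
    simp only [one_div, ← div_eq_inv_mul]
    exact div_le_div₀ (by positivity) le_rfl hm hlb

lemma sq_mul_Gfun_le (hν : 0 < ν) (hh : h ∈ Set.Ico (0 : ℝ) 1) (u : ℝ) :
    u ^ 2 * Gfun ν h u ≤ 2 * ν / Real.pi *
      ((1 / mlb ν (Real.cos (Real.arcsin h))) * (1 / (Real.cos (Real.arcsin h)) ^ 2)) := by
  set c := Real.cos (Real.arcsin h) with hcdef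
  have hc := cos_arcsin_pos hh
  have hm := mlb_pos hν hc
  have hπ := Real.pi_pos
  rcases eq_or_ne u 0 with rfl | hu
  · simp only [ne_eq, OfNat.ofNat_ne_zero, not_false_eq_true, zero_pow, zero_mul]
    positivity
  · have habs : 0 < |u| := abs_pos.mpr hu
    have hGG : Gfun ν h u = Gfun ν h |u| := by
      rw [Gfun_eq, Gfun_eq, abs_abs]
    have hsq : u ^ 2 = |u| ^ 2 := (sq_abs u).symm
    rw [hGG, hsq, sq_mul_Gfun_eq hν hh habs]
    refine mul_le_mul_of_nonneg_left ?_ (by positivity)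
    have hmono : ∫ s in Ioi (0:ℝ), s * Real.exp (-c * s) / dnm ν c (s / |u|)
        ≤ ∫ s in Ioi (0:ℝ), (1 / mlb ν c) * (s * Real.exp (-c * s)) := by
      refine setIntegral_mono_on (integrableOn_sub_integrand hν hh |u|)
        ((integrable_base hc).const_mul _) measurableSet_Ioi (fun s hs => ?_)
      have hs0 : 0 < s := hs
      have hlb := dnm_lb hν hc (s / |u|)
      have he := Real.exp_pos (-c * s)
      simp only [one_div, ← div_eq_inv_mul]
      exact div_le_div₀ (by positivity) le_rfl hm hlb
    refine hmono.trans ?_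
    rw [integral_const_mul, integral_base hc]

lemma tendsto_sq_mul_Gfun (hν : 0 < ν) (hh : h ∈ Set.Ico (0 : ℝ) 1) :
    Tendsto (fun u : ℝ => u ^ 2 * Gfun ν h u) atTop
      (nhds (ν / (2 * Real.pi * (Real.cos (Real.arcsin h)) ^ 2))) := by
  set c := Real.cos (Real.arcsin h) with hcdef
  have hc := cos_arcsin_pos hh
  have hm := mlb_pos hν hc
  have hπ := Real.pi_pos
  have h4 : dnm ν c 0 = 4 := by unfold dnm; norm_num
  have key : Tendsto (fun u : ℝ => ∫ s in Ioi (0:ℝ),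
      s * Real.exp (-c * s) / dnm ν c (s / u)) atTop
      (nhds (∫ s in Ioi (0:ℝ), s * Real.exp (-c * s) / 4)) := by
    refine tendsto_integral_filter_of_dominated_convergence
      (fun s => (1 / mlb ν c) * (s * Real.exp (-c * s))) ?_ ?_ ?_ ?_
    · refine Eventually.of_forall (fun u => ?_)
      exact ((continuous_id.mul (by fun_prop)).div
        ((continuous_dnm ν c).comp (continuous_id.div_const u))
        (fun s => (dnm_pos hν hc _).ne')).aestronglyMeasurable
    · refine Eventually.of_forall (fun u => ?_)
      refine (ae_restrict_iff' measurableSet_Ioi).mpr (ae_of_all _ fun s hs => ?_)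
      have hs0 : 0 < s := hs
      have hd := dnm_pos hν hc (s / u)
      have hlb := dnm_lb hν hc (s / u)
      have he := Real.exp_pos (-c * s)
      rw [Real.norm_eq_abs, abs_of_nonneg (by positivity)]
      simp only [one_div, ← div_eq_inv_mul]
      exact div_le_div₀ (by positivity) le_rfl hm hlb
    · exact (integrable_base hc).const_mul _
    · refine ae_of_all _ (fun s => ?_)
      have h1 : Tendsto (fun u : ℝ => s / u) atTop (nhds 0) := by
        simpa [div_eq_mul_inv] using (tendsto_inv_atTop_zero (𝕜 := ℝ)).const_mul s
      have h2 : Tendsto (fun u : ℝ => dnm ν c (s / u)) atTop (nhds (dnm ν c 0)) :=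
        ((continuous_dnm ν c).tendsto 0).comp h1
      rw [h4] at h2
      exact Tendsto.div tendsto_const_nhds h2 (by norm_num)
  have hval : ∫ s in Ioi (0:ℝ), s * Real.exp (-c * s) / 4 = (1 / c ^ 2) / 4 := by
    rw [integral_div, integral_base hc]
  rw [hval] at key
  have key2 := key.const_mul (2 * ν / Real.pi)
  have hlim : 2 * ν / Real.pi * ((1 / c ^ 2) / 4) = ν / (2 * Real.pi * c ^ 2) := by
    field_simp
    ring
  rw [hlim] at key2
  refine key2.congr' ?_
  filter_upwards [eventually_gt_atTop (0:ℝ)] with u hu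
  exact (sq_mul_Gfun_eq hν hh hu).symm

end LimitLayer

/-- multipole asymptotics: for `f` with quartic decay,
`x² ∫ G(x-y) f(y) dy → (ν/(2π cos²θ_h)) ∫ f(y) dy` as `x → +∞`. -/
theorem multipole_asymptotics (ν h : ℝ) (hν : 0 < ν) (hh : h ∈ Set.Ico (0 : ℝ) 1)
    (f : ℝ → ℝ) (hf : Measurable f) (C₀ : ℝ) (hC₀ : 0 < C₀)
    (hfb : ∀ y : ℝ, |f y| ≤ C₀ / (1 + y ^ 4)) :
    Filter.Tendsto (fun x : ℝ => x ^ 2 * ∫ y : ℝ, Gfun ν h (x - y) * f y)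
      Filter.atTop
      (nhds (ν / (2 * Real.pi * Real.cos (Real.arcsin h) ^ 2) * ∫ y : ℝ, f y)) := by
  have hc := cos_arcsin_pos hh
  set c := Real.cos (Real.arcsin h) with hcdef
  have hπ := Real.pi_pos
  have hm := mlb_pos hν hc
  set A := 2 * ν / Real.pi * ((1 / mlb ν c) * (1 / c ^ 2)) with hA
  set B := 2 * ν / Real.pi * ∫ t in Ioi (0:ℝ), t / dnm ν c t with hB
  have hA0 : 0 ≤ A := by
    rw [hA]
    have h1 : (0:ℝ) ≤ 1 / mlb ν c := (one_div_nonneg).mpr hm.le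
    have h2 : (0:ℝ) ≤ 1 / c ^ 2 := by positivity
    positivity
  have hB0 : 0 ≤ B := by
    rw [hB]
    refine mul_nonneg (by positivity) ?_
    refine setIntegral_nonneg measurableSet_Ioi (fun t ht => ?_)
    have ht0 : 0 < t := ht
    exact div_nonneg ht0.le (dnm_pos hν hc t).le
  have hGB : ∀ u, Gfun ν h u ≤ B := fun u => Gfun_le hν hh u
  have hGA : ∀ u, u ^ 2 * Gfun ν h u ≤ A := fun u => sq_mul_Gfun_le hν hh u
  have hG0 : ∀ u, 0 ≤ Gfun ν h u := fun u => Gfun_nonneg hν hh u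
  have hGmeas := Gfun_measurable hν hh
  have key := tendsto_sq_mul_Gfun hν hh
  set D := C₀ * (4 * A + 4 * B) with hD
  have hbound_int : Integrable (fun y : ℝ => D * (1 + y ^ 2)⁻¹) :=
    integrable_inv_one_add_sq.const_mul D
  have main : Tendsto (fun x : ℝ => ∫ y : ℝ, x ^ 2 * (Gfun ν h (x - y) * f y)) atTop
      (nhds (∫ y : ℝ, (ν / (2 * Real.pi * c ^ 2)) * f y)) := by
    refine tendsto_integral_filter_of_dominated_convergence
      (fun y => D * (1 + y ^ 2)⁻¹) ?_ ?_ hbound_int ?_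
    · exact Eventually.of_forall fun x =>
        (((hGmeas.comp (measurable_id.const_sub x)).mul hf).const_mul _).aestronglyMeasurable
    · refine Eventually.of_forall fun x => ae_of_all _ fun y => ?_
      have h1 : x ^ 2 * Gfun ν h (x - y) ≤ 2 * A + 2 * B * y ^ 2 := by
        have e1 := hGA (x - y)
        have e2 : y ^ 2 * Gfun ν h (x - y) ≤ y ^ 2 * B :=
          mul_le_mul_of_nonneg_left (hGB _) (sq_nonneg y)
        have e3 : x ^ 2 ≤ 2 * (x - y) ^ 2 + 2 * y ^ 2 := by nlinarith [sq_nonneg (x - 2 * y)]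
        have e4 : x ^ 2 * Gfun ν h (x - y) ≤ (2 * (x - y) ^ 2 + 2 * y ^ 2) * Gfun ν h (x - y) :=
          mul_le_mul_of_nonneg_right e3 (hG0 _)
        nlinarith [e1, e2, e4]
      have h2 : |f y| ≤ C₀ / (1 + y ^ 4) := hfb y
      have hy4 : (0:ℝ) < 1 + y ^ 4 := by positivity
      have hy2 : (0:ℝ) < 1 + y ^ 2 := by positivity
      have hGxy := hG0 (x - y)
      rw [Real.norm_eq_abs]
      calc |x ^ 2 * (Gfun ν h (x - y) * f y)| = x ^ 2 * Gfun ν h (x - y) * |f y| := by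
            rw [abs_mul, abs_mul, abs_of_nonneg (sq_nonneg x), abs_of_nonneg hGxy]; ring
        _ ≤ (2 * A + 2 * B * y ^ 2) * (C₀ / (1 + y ^ 4)) := by
            refine mul_le_mul h1 h2 (abs_nonneg _) ?_
            nlinarith [hA0, hB0, sq_nonneg y]
        _ ≤ D * (1 + y ^ 2)⁻¹ := by
            have hl : (2 * A + 2 * B * y ^ 2) * (C₀ / (1 + y ^ 4))
                = ((2 * A + 2 * B * y ^ 2) * C₀) / (1 + y ^ 4) := by ring
            have hrr : D * (1 + y ^ 2)⁻¹ = D / (1 + y ^ 2) := by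
              rw [division_def]
            rw [hl, hrr, div_le_div_iff₀ hy4 hy2, hD]
            nlinarith [mul_nonneg (mul_nonneg hC₀.le hA0) (sq_nonneg (y ^ 2 - 1)),
              mul_nonneg (mul_nonneg hC₀.le hB0) (sq_nonneg (y ^ 2 - 1)),
              mul_nonneg (mul_nonneg hC₀.le hA0) (sq_nonneg (y ^ 2)),
              mul_nonneg (mul_nonneg hC₀.le hB0) (sq_nonneg (y ^ 2)),
              mul_nonneg hC₀.le hA0, mul_nonneg hC₀.le hB0]
    · refine ae_of_all _ fun y => ?_
      have hsub : Tendsto (fun x : ℝ => x - y) atTop atTop := by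
        simpa [sub_eq_add_neg] using tendsto_atTop_add_const_right atTop (-y) tendsto_id
      have h1 : Tendsto (fun x : ℝ => (x - y) ^ 2 * Gfun ν h (x - y)) atTop
          (nhds (ν / (2 * Real.pi * c ^ 2))) := key.comp hsub
      have hinv : Tendsto (fun x : ℝ => 1 + y * (x - y)⁻¹) atTop (nhds 1) := by
        have h0 := (hsub.inv_tendsto_atTop).const_mul y
        simpa using tendsto_const_nhds.add h0
      have h2 : Tendsto (fun x : ℝ => x / (x - y)) atTop (nhds 1) := by
        refine hinv.congr' ?_
        filter_upwards [eventually_gt_atTop y] with x hx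
        have hne : x - y ≠ 0 := sub_ne_zero.mpr hx.ne'
        field_simp
        ring
      have h3 : Tendsto
          (fun x : ℝ => (x / (x - y)) ^ 2 * ((x - y) ^ 2 * Gfun ν h (x - y)) * f y) atTop
          (nhds (1 ^ 2 * (ν / (2 * Real.pi * c ^ 2)) * f y)) :=
        ((h2.pow 2).mul h1).mul tendsto_const_nhds
      rw [one_pow, one_mul] at h3
      refine h3.congr' ?_
      filter_upwards [eventually_gt_atTop y] with x hx
      have hne : x - y ≠ 0 := sub_ne_zero.mpr hx.ne'
      field_simp
  have hrw : (fun x : ℝ => x ^ 2 * ∫ y : ℝ, Gfun ν h (x - y) * f y)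
      = fun x : ℝ => ∫ y : ℝ, x ^ 2 * (Gfun ν h (x - y) * f y) :=
    funext fun x => (integral_const_mul _ _).symm
  rw [show (∫ y : ℝ, (ν / (2 * Real.pi * c ^ 2)) * f y)
      = ν / (2 * Real.pi * c ^ 2) * ∫ y : ℝ, f y from integral_const_mul _ _] at main
  rw [hrw]
  exact main
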